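/- For any positive Borel measure μ on ℂ and the skew-product ⟨f,g⟩_s = ∫_ℂ (f \bar g − g \bar f)(z − \bar z) dμ(z): if μ is radially symmetric with finite moments h_k = ∫_ℂ |z|^{2k} dμ(z), then the polynomials q_{2k+1}(z) = z^{2k+1} and q_{2k}(z) = z^{2k} + ∑_{ℓ=0}^{k-1} z^{2ℓ} ∏_{j=0}^{k-ℓ-1} h_{2ℓ+2j+2}/h_{2ℓ+2j+1} form a family of skew-orthogonal polynomials with skew-norms r_k = 2 h_{2k+1}, i.e. ⟨q_{2k}, q_{2ℓ}⟩_s = ⟨q_{2k+1}, q_{2ℓ+1}⟩_s = 0 and ⟨q_{2k}, q_{2ℓ+1}⟩_s = r_k δ_{k,ℓ}. -/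

import Mathlib

open MeasureTheory

theorem stmt_15
    (w : ℝ → ℝ) (hw : ∀ r, 0 ≤ w r)
    (μ : Measure ℂ)
    (hμ : μ = (volume : Measure ℂ).withDensity
      (fun z => ENNReal.ofReal (w (‖z‖) / Real.pi)))
    (h : ℕ → ℝ)
    (hh : ∀ m : ℕ, h m = ∫ z : ℂ, ‖z‖ ^ (2 * m) ∂μ)
    (hfin : ∀ m : ℕ, Integrable (fun z : ℂ => ‖z‖ ^ (2 * m)) μ)
    (hpos : ∀ m : ℕ, 0 < h m)
    -- the skew-product
    (S : (ℂ → ℂ) → (ℂ → ℂ) → ℂ)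
    (hS : ∀ f g : ℂ → ℂ, S f g =
      ∫ z : ℂ, (f z * starRingEnd ℂ (g z) - g z * starRingEnd ℂ (f z)) *
        (z - starRingEnd ℂ z) ∂μ)
    -- the skew-orthogonal polynomials
    (qe qo : ℕ → ℂ → ℂ)
    (hqo : ∀ k : ℕ, ∀ z : ℂ, qo k z = z ^ (2 * k + 1))
    (hqe : ∀ k : ℕ, ∀ z : ℂ, qe k z =
      z ^ (2 * k) + ∑ l ∈ Finset.range k, z ^ (2 * l) *
        ∏ j ∈ Finset.range (k - l), ((h (2 * l + 2 * j + 2) / h (2 * l + 2 * j + 1) : ℝ) : ℂ)) :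
    (∀ k l : ℕ, S (qe k) (qe l) = 0) ∧
    (∀ k l : ℕ, S (qo k) (qo l) = 0) ∧
    (∀ k l : ℕ, S (qe k) (qo l) = if k = l then ((2 * h (2 * k + 1) : ℝ) : ℂ) else 0) := by
  classical
  -- the coefficients
  set c : ℕ → ℕ → ℝ := fun k l =>
    ∏ j ∈ Finset.range (k - l), (h (2 * l + 2 * j + 2) / h (2 * l + 2 * j + 1)) with hc
  -- rotation invariance of μ
  have hmap : ∀ e : Circle, Measure.map (fun z => (e : ℂ) * z) μ = μ := by
    intro e
    have hrad : ∀ z : ℂ, ENNReal.ofReal (w (‖(e : ℂ) * z‖) / Real.pi)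
        = ENNReal.ofReal (w (‖z‖) / Real.pi) := by
      intro z
      rw [norm_mul, Circle.norm_coe, one_mul]
    have hmp : MeasurePreserving (fun z => (e : ℂ) * z) (volume : Measure ℂ) volume := by
      have h1 := (rotation e).measurePreserving
      have h2 : ⇑(rotation e) = fun z => (e : ℂ) * z := funext fun z => rotation_apply e z
      rwa [h2] at h1
    have hemb : MeasurableEmbedding (fun z : ℂ => (e : ℂ) * z) := by
      have h1 := (rotation e).toHomeomorph.measurableEmbedding
      have h2 : ⇑(rotation e).toHomeomorph = fun z => (e : ℂ) * z :=
        funext fun z => rotation_apply e z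
      rwa [h2] at h1
    rw [hμ]
    set f : ℂ → ENNReal := fun z => ENNReal.ofReal (w (‖z‖) / Real.pi) with hf
    ext s hs
    rw [Measure.map_apply hmp.measurable hs,
      withDensity_apply _ (hs.preimage hmp.measurable), withDensity_apply _ hs,
      ← lintegral_indicator (hs.preimage hmp.measurable) f, ← lintegral_indicator hs f]
    have hind : ∀ a : ℂ, ((fun z => (e : ℂ) * z) ⁻¹' s).indicator f a
        = s.indicator f ((e : ℂ) * a) := by
      intro a
      by_cases ha : (e : ℂ) * a ∈ s <;>
        simp [Set.indicator, Set.mem_preimage, ha, hf, hrad a]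
    simp_rw [hind]
    rw [← hemb.lintegral_map, hmp.map_eq]
  -- embedding (for any circle element)
  have hembed : ∀ e : Circle, MeasurableEmbedding (fun z : ℂ => (e : ℂ) * z) := by
    intro e
    have h1 := (rotation e).toHomeomorph.measurableEmbedding
    have h2 : ⇑(rotation e).toHomeomorph = fun z => (e : ℂ) * z :=
      funext fun z => rotation_apply e z
    rwa [h2] at h1
  -- moments
  have hM : ∀ m n : ℕ, (∫ z : ℂ, z ^ m * (starRingEnd ℂ z) ^ n ∂μ)
      = if m = n then ((h m : ℝ) : ℂ) else 0 := by
    intro m n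
    rcases eq_or_ne m n with rfl | hmn
    · simp only [if_pos rfl]
      have hpt : ∀ z : ℂ, z ^ m * (starRingEnd ℂ z) ^ m
          = ((‖z‖ ^ (2 * m) : ℝ) : ℂ) := by
        intro z
        rw [← mul_pow, Complex.mul_conj, pow_mul, ← Complex.sq_norm]
        push_cast
        ring
      simp_rw [hpt]
      rw [show (∫ z : ℂ, ((‖z‖ ^ (2 * m) : ℝ) : ℂ) ∂μ)
          = ((∫ z : ℂ, ‖z‖ ^ (2 * m) ∂μ : ℝ) : ℂ) from integral_ofReal, ← hh]
      simp
    · simp only [if_neg hmn]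
      set d : ℝ := (m : ℝ) - n with hd
      have hd0 : d ≠ 0 := sub_ne_zero.2 (by exact_mod_cast hmn)
      set e : Circle := Circle.exp (Real.pi / d) with he
      have hce : (e : ℂ) = Complex.exp ((Real.pi / d : ℝ) * Complex.I) := Circle.coe_exp _
      have hconj : (starRingEnd ℂ) (e : ℂ)
          = Complex.exp (-((Real.pi / d : ℝ) * Complex.I)) := by
        rw [hce, ← Complex.exp_conj]
        congr 1
        simp [Complex.conj_I]
      have hcc : (e : ℂ) ^ m * ((starRingEnd ℂ) (e : ℂ)) ^ n = -1 := by
        rw [hconj, hce, ← Complex.exp_nat_mul, ← Complex.exp_nat_mul, ← Complex.exp_add]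
        have h1 : ((m : ℂ) - n) = (d : ℂ) := by rw [hd]; push_cast; ring
        have h2 : (m : ℂ) * ((Real.pi / d : ℝ) * Complex.I)
            + n * -((Real.pi / d : ℝ) * Complex.I) = (Real.pi : ℂ) * Complex.I := by
          push_cast
          rw [show (m : ℂ) * (Real.pi / d * Complex.I) + n * -(Real.pi / d * Complex.I)
              = ((m : ℂ) - n) * (Real.pi / d * Complex.I) by ring, h1]
          have hd0' : (d : ℂ) ≠ 0 := by exact_mod_cast hd0
          field_simp
        rw [h2, Complex.exp_pi_mul_I]
      have key : ∫ z : ℂ, z ^ m * (starRingEnd ℂ z) ^ n ∂μ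
          = -1 * ∫ z : ℂ, z ^ m * (starRingEnd ℂ z) ^ n ∂μ := by
        conv_lhs => rw [← hmap e, (hembed e).integral_map]
        have hpt : ∀ z : ℂ, ((e : ℂ) * z) ^ m * (starRingEnd ℂ ((e : ℂ) * z)) ^ n
            = ((e : ℂ) ^ m * ((starRingEnd ℂ) (e : ℂ)) ^ n)
              * (z ^ m * (starRingEnd ℂ z) ^ n) := by
          intro z; simp only [mul_pow, map_mul]; ring
        simp_rw [hpt, hcc]
        rw [integral_const_mul]
      set Iv := ∫ z : ℂ, z ^ m * (starRingEnd ℂ z) ^ n ∂μ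
      have h2 : (2 : ℂ) * Iv = 0 := by linear_combination key
      rcases mul_eq_zero.mp h2 with h | h
      · exact absurd h two_ne_zero
      · exact h
  -- integrability of monomials
  have hMint : ∀ m n : ℕ, Integrable (fun z : ℂ => z ^ m * (starRingEnd ℂ z) ^ n) μ := by
    intro m n
    have hg : Integrable
        (fun z : ℂ => ‖z‖ ^ (2 * 0) + ‖z‖ ^ (2 * (m + n))) μ :=
      (hfin 0).add (hfin (m + n))
    refine hg.mono ?_ ?_
    · exact ((continuous_pow m).mul (Complex.continuous_conj.pow n)).aestronglyMeasurable
    · filter_upwards with z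
      have habs : ‖z ^ m * (starRingEnd ℂ z) ^ n‖ = ‖z‖ ^ (m + n) := by
        simp [norm_mul, norm_pow, Complex.norm_conj, pow_add]
      rw [habs]
      have h0 : (0 : ℝ) ≤ ‖z‖ ^ (2 * 0) + ‖z‖ ^ (2 * (m + n)) := by
        positivity
      rw [Real.norm_eq_abs, _root_.abs_of_nonneg h0]
      have hx : (0 : ℝ) ≤ ‖z‖ := norm_nonneg z
      have hsq : ‖z‖ ^ (2 * (m + n)) = (‖z‖ ^ (m + n)) ^ 2 := by
        rw [← pow_mul]; ring_nf
      rw [hsq]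
      norm_num
      nlinarith [sq_nonneg (‖z‖ ^ (m + n) - 1)]
  -- integrability of the skew integrand for monomials
  have hTint : ∀ a b : ℕ, Integrable (fun z : ℂ =>
      (z ^ a * (starRingEnd ℂ z) ^ b - z ^ b * (starRingEnd ℂ z) ^ a)
        * (z - starRingEnd ℂ z)) μ := by
    intro a b
    have i1 : Integrable (fun z : ℂ =>
        z ^ (a + 1) * (starRingEnd ℂ z) ^ b - z ^ a * (starRingEnd ℂ z) ^ (b + 1)) μ :=
      (hMint (a + 1) b).sub (hMint a (b + 1))
    have i2 : Integrable (fun z : ℂ =>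
        z ^ (b + 1) * (starRingEnd ℂ z) ^ a - z ^ b * (starRingEnd ℂ z) ^ (a + 1)) μ :=
      (hMint (b + 1) a).sub (hMint b (a + 1))
    have hi : Integrable (fun z : ℂ =>
        (z ^ (a + 1) * (starRingEnd ℂ z) ^ b - z ^ a * (starRingEnd ℂ z) ^ (b + 1))
        - (z ^ (b + 1) * (starRingEnd ℂ z) ^ a - z ^ b * (starRingEnd ℂ z) ^ (a + 1))) μ :=
      i1.sub i2
    refine hi.congr ?_
    filter_upwards with z
    ring
  -- the skew-product of two monomials
  have hT : ∀ a b : ℕ, (∫ z : ℂ,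
      (z ^ a * (starRingEnd ℂ z) ^ b - z ^ b * (starRingEnd ℂ z) ^ a)
        * (z - starRingEnd ℂ z) ∂μ)
      = (if a + 1 = b then ((2 * h b : ℝ) : ℂ) else 0)
        - (if a = b + 1 then ((2 * h a : ℝ) : ℂ) else 0) := by
    intro a b
    have hpt : ∀ z : ℂ,
        (z ^ a * (starRingEnd ℂ z) ^ b - z ^ b * (starRingEnd ℂ z) ^ a)
          * (z - starRingEnd ℂ z)
        = (z ^ (a + 1) * (starRingEnd ℂ z) ^ b - z ^ a * (starRingEnd ℂ z) ^ (b + 1))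
          - (z ^ (b + 1) * (starRingEnd ℂ z) ^ a - z ^ b * (starRingEnd ℂ z) ^ (a + 1)) := by
      intro z; ring
    have i1 : Integrable (fun z : ℂ =>
        z ^ (a + 1) * (starRingEnd ℂ z) ^ b - z ^ a * (starRingEnd ℂ z) ^ (b + 1)) μ :=
      (hMint (a + 1) b).sub (hMint a (b + 1))
    have i2 : Integrable (fun z : ℂ =>
        z ^ (b + 1) * (starRingEnd ℂ z) ^ a - z ^ b * (starRingEnd ℂ z) ^ (a + 1)) μ :=
      (hMint (b + 1) a).sub (hMint b (a + 1))
    simp_rw [hpt]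
    rw [integral_sub i1 i2,
      integral_sub (hMint (a + 1) b) (hMint a (b + 1)),
      integral_sub (hMint (b + 1) a) (hMint b (a + 1)),
      hM (a + 1) b, hM a (b + 1), hM (b + 1) a, hM b (a + 1)]
    rcases eq_or_ne (a + 1) b with h1 | h1
    · subst h1
      have h2 : ¬ (a = a + 1 + 1) := by omega
      have h3 : ¬ (a + 1 + 1 = a) := by omega
      simp only [if_pos rfl, if_neg h2, if_neg h3]
      push_cast
      ring
    · rcases eq_or_ne a (b + 1) with h2 | h2
      · subst h2
        have h3 : ¬ (b + 1 + 1 = b) := by omega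
        have h4 : ¬ (b = b + 1 + 1) := by omega
        simp only [if_pos rfl, if_neg h1, if_neg h3, if_neg h4]
        push_cast
        ring
      · simp only [if_neg h1, if_neg h2, if_neg (Ne.symm h1), if_neg (Ne.symm h2)]
        ring
  -- general bilinearity over finite monomial sums
  have hSgen : ∀ (A B : Finset ℕ) (p q : ℕ → ℝ) (e f : ℕ → ℕ),
      (∫ z : ℂ, ((∑ a ∈ A, ((p a : ℝ) : ℂ) * z ^ e a)
          * starRingEnd ℂ (∑ b ∈ B, ((q b : ℝ) : ℂ) * z ^ f b)
        - (∑ b ∈ B, ((q b : ℝ) : ℂ) * z ^ f b)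
          * starRingEnd ℂ (∑ a ∈ A, ((p a : ℝ) : ℂ) * z ^ e a))
        * (z - starRingEnd ℂ z) ∂μ)
      = ∑ a ∈ A, ∑ b ∈ B, ((p a : ℝ) : ℂ) * ((q b : ℝ) : ℂ) *
          ((if e a + 1 = f b then ((2 * h (f b) : ℝ) : ℂ) else 0)
            - (if e a = f b + 1 then ((2 * h (e a) : ℝ) : ℂ) else 0)) := by
    intro A B p q e f
    have hpt : ∀ z : ℂ, ((∑ a ∈ A, ((p a : ℝ) : ℂ) * z ^ e a)
          * starRingEnd ℂ (∑ b ∈ B, ((q b : ℝ) : ℂ) * z ^ f b)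
        - (∑ b ∈ B, ((q b : ℝ) : ℂ) * z ^ f b)
          * starRingEnd ℂ (∑ a ∈ A, ((p a : ℝ) : ℂ) * z ^ e a))
        * (z - starRingEnd ℂ z)
        = ∑ a ∈ A, ∑ b ∈ B, ((p a : ℝ) : ℂ) * ((q b : ℝ) : ℂ) *
            ((z ^ e a * (starRingEnd ℂ z) ^ f b - z ^ f b * (starRingEnd ℂ z) ^ e a)
              * (z - starRingEnd ℂ z)) := by
      intro z
      simp only [map_sum, map_mul, map_pow, Complex.conj_ofReal]
      rw [Finset.sum_mul_sum, Finset.sum_mul_sum, Finset.sum_comm (s := B) (t := A),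
        ← Finset.sum_sub_distrib, Finset.sum_mul]
      refine Finset.sum_congr rfl fun a _ => ?_
      rw [← Finset.sum_sub_distrib, Finset.sum_mul]
      refine Finset.sum_congr rfl fun b _ => by ring
    simp_rw [hpt]
    rw [integral_finset_sum _ (fun a _ => integrable_finset_sum _
      (fun b _ => ((hTint (e a) (f b)).const_mul _)))]
    refine Finset.sum_congr rfl fun a _ => ?_
    rw [integral_finset_sum _ (fun b _ => ((hTint (e a) (f b)).const_mul _))]
    refine Finset.sum_congr rfl fun b _ => ?_
    rw [integral_const_mul, hT (e a) (f b)]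
  -- rewrite qe and qo as monomial sums
  have hqe' : ∀ k : ℕ, ∀ z : ℂ, qe k z
      = ∑ a ∈ Finset.range (k + 1), ((c k a : ℝ) : ℂ) * z ^ (2 * a) := by
    intro k z
    rw [hqe k z, Finset.sum_range_succ]
    have hck : c k k = 1 := by simp [hc]
    rw [hck]
    push_cast
    rw [add_comm]
    congr 1
    · refine Finset.sum_congr rfl fun a _ => ?_
      rw [Complex.ofReal_prod]
      push_cast
      ring
    · ring
  have hqo' : ∀ k : ℕ, ∀ z : ℂ, qo k z
      = ∑ a ∈ Finset.range 1, (((1 : ℝ) : ℝ) : ℂ) * z ^ (2 * k + 1) := by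
    intro k z
    simp [hqo k z]
  -- the recursion for the coefficients
  have hcrec : ∀ k l : ℕ, l < k → c k l * h (2 * l + 1) = c k (l + 1) * h (2 * l + 2) := by
    intro k l hlk
    have hn : k - l = (k - (l + 1)) + 1 := by omega
    have hprod : c k l = c k (l + 1) * (h (2 * l + 2) / h (2 * l + 1)) := by
      rw [hc]
      simp only
      rw [hn, Finset.prod_range_succ']
      have hfact : ∀ j : ℕ, h (2 * l + 2 * (j + 1) + 2) / h (2 * l + 2 * (j + 1) + 1)
          = h (2 * (l + 1) + 2 * j + 2) / h (2 * (l + 1) + 2 * j + 1) := fun j => by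
        rw [show 2 * l + 2 * (j + 1) + 2 = 2 * (l + 1) + 2 * j + 2 by ring,
          show 2 * l + 2 * (j + 1) + 1 = 2 * (l + 1) + 2 * j + 1 by ring]
      simp_rw [hfact]
    rw [hprod, mul_assoc, div_mul_cancel₀ _ (hpos (2 * l + 1)).ne']
  -- the three families of identities
  refine ⟨?_, ?_, ?_⟩
  · -- even-even
    intro k l
    rw [hS]
    simp_rw [hqe']
    rw [hSgen (Finset.range (k + 1)) (Finset.range (l + 1)) (c k) (c l)
      (fun a => 2 * a) (fun b => 2 * b)]
    refine Finset.sum_eq_zero fun a _ => Finset.sum_eq_zero fun b _ => ?_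
    have h1 : ¬ (2 * a + 1 = 2 * b) := by omega
    have h2 : ¬ (2 * a = 2 * b + 1) := by omega
    simp [h1, h2]
  · -- odd-odd
    intro k l
    rw [hS]
    simp_rw [hqo']
    rw [hSgen (Finset.range 1) (Finset.range 1) (fun _ => 1) (fun _ => 1)
      (fun _ => 2 * k + 1) (fun _ => 2 * l + 1)]
    refine Finset.sum_eq_zero fun a _ => Finset.sum_eq_zero fun b _ => ?_
    have h1 : ¬ (2 * k + 1 + 1 = 2 * l + 1) := by omega
    have h2 : ¬ (2 * k + 1 = 2 * l + 1 + 1) := by omega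
    simp [h1, h2, show ¬ (2 * k + 1 = 2 * l) by omega, show ¬ (2 * k = 2 * l + 1) by omega]
  · -- even-odd
    intro k l
    rw [hS]
    simp_rw [hqe', hqo']
    rw [hSgen (Finset.range (k + 1)) (Finset.range 1) (c k) (fun _ => 1)
      (fun a => 2 * a) (fun _ => 2 * l + 1)]
    have hterm : ∀ a ∈ Finset.range (k + 1),
        (∑ b ∈ Finset.range 1, ((c k a : ℝ) : ℂ) * (((1 : ℝ) : ℝ) : ℂ) *
          ((if 2 * a + 1 = 2 * l + 1 then ((2 * h (2 * l + 1) : ℝ) : ℂ) else 0)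
            - (if 2 * a = 2 * l + 1 + 1 then ((2 * h (2 * a) : ℝ) : ℂ) else 0)))
        = (if a = l then ((c k l * (2 * h (2 * l + 1)) : ℝ) : ℂ) else 0)
          - (if a = l + 1 then ((c k (l + 1) * (2 * h (2 * l + 2)) : ℝ) : ℂ) else 0) := by
      intro a _
      rw [Finset.sum_range_one]
      rcases eq_or_ne a l with rfl | h1
      · have h2 : ¬ (2 * a = 2 * a + 1 + 1) := by omega
        have h3 : ¬ (a = a + 1) := by omega
        simp only [if_pos rfl, if_neg h2, if_neg h3]
        push_cast
        ring
      · rcases eq_or_ne a (l + 1) with rfl | h2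
        · have h3 : 2 * (l + 1) = 2 * l + 1 + 1 := by ring
          have h4 : ¬ (2 * (l + 1) + 1 = 2 * l + 1) := by omega
          simp only [if_pos rfl, if_pos h3, if_neg h1, if_neg h4]
          rw [show 2 * (l + 1) = 2 * l + 2 by ring]
          push_cast
          ring
        · have h3 : ¬ (2 * a + 1 = 2 * l + 1) := by omega
          have h4 : ¬ (2 * a = 2 * l + 1 + 1) := by omega
          simp only [if_neg h1, if_neg h2, if_neg h3, if_neg h4]
          ring
    rw [Finset.sum_congr rfl hterm, Finset.sum_sub_distrib,
      Finset.sum_ite_eq' (Finset.range (k + 1)) l _,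
      Finset.sum_ite_eq' (Finset.range (k + 1)) (l + 1) _]
    rcases lt_trichotomy k l with hkl | rfl | hkl
    · have h1 : l ∉ Finset.range (k + 1) := by simp; omega
      have h2 : l + 1 ∉ Finset.range (k + 1) := by simp; omega
      have h3 : k ≠ l := by omega
      simp [h1, h2, h3]
    · have h1 : k ∈ Finset.range (k + 1) := by simp
      have h2 : k + 1 ∉ Finset.range (k + 1) := by simp
      have hck : c k k = 1 := by simp [hc]
      simp only [if_pos h1, if_neg h2, if_pos rfl, hck]
      push_cast
      ring
    · have h1 : l ∈ Finset.range (k + 1) := by simp; omega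
      have h2 : l + 1 ∈ Finset.range (k + 1) := by simp; omega
      have h3 : k ≠ l := by omega
      simp only [if_pos h1, if_pos h2, if_neg h3]
      have := hcrec k l hkl
      rw [show c k l * (2 * h (2 * l + 1)) = 2 * (c k l * h (2 * l + 1)) by ring, this]
      push_cast
      ring
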